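/- Under the local assumptions, let x ∈ B(x*, δ) and set x⁺ = x + d, where d is the LMMSS direction at x (the solution of (J(x)ᵀJ(x) + λ(x)LᵀL)d = −J(x)ᵀF(x) with λ(x) = ‖F(x)‖², taking d = 0 if F(x) = 0). If also x⁺ ∈ B(x*, δ), then dist(x⁺, X*) ≤ c₅·dist(x, X*)², where c₅ = (c₁c₃² + c₄)/c₂ with c₃ = (1/(c₂√γ))·√(c₁² + c₂²(‖L‖² + c_F²)) and c₄ = √(c₁² + c_F²‖L‖²). -/
import Mathlib


open Matrix Metric

/-- The continuous linear map on Euclidean spaces induced by a real matrix. -/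
noncomputable def matCLM {m n : ℕ} (A : Matrix (Fin m) (Fin n) ℝ) :
    EuclideanSpace ℝ (Fin n) →L[ℝ] EuclideanSpace ℝ (Fin m) :=
  LinearMap.toContinuousLinearMap (Matrix.toEuclideanLin A)

open scoped RealInnerProductSpace

lemma matCLM_add_apply {m n : ℕ} (A B : Matrix (Fin m) (Fin n) ℝ) (v : EuclideanSpace ℝ (Fin n)) :
    matCLM (A + B) v = matCLM A v + matCLM B v := by
  simp [matCLM, map_add]

lemma matCLM_smul_apply {m n : ℕ} (c : ℝ) (A : Matrix (Fin m) (Fin n) ℝ) (v : EuclideanSpace ℝ (Fin n)) :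
    matCLM (c • A) v = c • matCLM A v := by
  simp [matCLM, _root_.map_smul]

lemma matCLM_mul_apply {m n k : ℕ} (A : Matrix (Fin m) (Fin n) ℝ) (B : Matrix (Fin n) (Fin k) ℝ)
    (v : EuclideanSpace ℝ (Fin k)) :
    matCLM (A * B) v = matCLM A (matCLM B v) := by
  simp [matCLM, Matrix.toEuclideanLin_apply, Matrix.mulVec_mulVec]

lemma matCLM_transpose_inner {m n : ℕ} (A : Matrix (Fin m) (Fin n) ℝ)
    (u : EuclideanSpace ℝ (Fin m)) (v : EuclideanSpace ℝ (Fin n)) :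
    ⟪matCLM Aᵀ u, v⟫ = ⟪u, matCLM A v⟫ := by
  have h : Matrix.toEuclideanLin Aᵀ = LinearMap.adjoint (Matrix.toEuclideanLin A) := by
    rw [← Matrix.conjTranspose_eq_transpose_of_trivial,
      Matrix.toEuclideanLin_conjTranspose_eq_adjoint]
  simp [matCLM, h, LinearMap.adjoint_inner_left]

lemma quad_min {n m p : ℕ} (A : EuclideanSpace ℝ (Fin n) →L[ℝ] EuclideanSpace ℝ (Fin m))
    (B : EuclideanSpace ℝ (Fin n) →L[ℝ] EuclideanSpace ℝ (Fin p))
    (f : EuclideanSpace ℝ (Fin m)) (lam : ℝ) (hlam : 0 ≤ lam)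
    (d : EuclideanSpace ℝ (Fin n))
    (horth : ∀ w, ⟪f + A d, A w⟫ + lam * ⟪B d, B w⟫ = 0)
    (v : EuclideanSpace ℝ (Fin n)) :
    ‖f + A d‖ ^ 2 + lam * ‖B d‖ ^ 2 ≤ ‖f + A v‖ ^ 2 + lam * ‖B v‖ ^ 2 := by
  have h1 : f + A v = (f + A d) + A (v - d) := by rw [map_sub]; abel
  have h2 : B v = B d + B (v - d) := by rw [map_sub]; abel
  have e1 := norm_add_sq_real (f + A d) (A (v - d))
  have e2 := norm_add_sq_real (B d) (B (v - d))
  rw [h1, h2, e1, e2]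
  have h3 := horth (v - d)
  nlinarith [sq_nonneg ‖A (v - d)‖, sq_nonneg ‖B (v - d)‖,
    mul_nonneg hlam (sq_nonneg ‖B (v - d)‖)]

/-- `c₃ = (1/(c₂√γ))·√(c₁² + c₂²(nL² + c_F²))`, where `nL = ‖L‖` (spectral norm). -/
noncomputable def lmC3 (c1 c2 cF γ nL : ℝ) : ℝ :=
  (1 / (c2 * Real.sqrt γ)) * Real.sqrt (c1 ^ 2 + c2 ^ 2 * (nL ^ 2 + cF ^ 2))

/-- `c₄ = √(c₁² + c_F²·nL²)`, where `nL = ‖L‖` (spectral norm). -/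
noncomputable def lmC4 (c1 cF nL : ℝ) : ℝ :=
  Real.sqrt (c1 ^ 2 + cF ^ 2 * nL ^ 2)

/-- `c₅ = (c₁c₃² + c₄)/c₂`. -/
noncomputable def lmC5 (c1 c2 cF γ nL : ℝ) : ℝ :=
  (c1 * (lmC3 c1 c2 cF γ nL) ^ 2 + lmC4 c1 cF nL) / c2

set_option maxHeartbeats 1000000 in
/-- under the local assumptions, a full LMMSS step from `x ∈ B(x*, δ)` to
`x⁺ = x + d` satisfies `dist(x⁺, X*) ≤ c₅ · dist(x, X*)²` provided `x⁺ ∈ B(x*, δ)`. -/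
theorem lmmss_quadratic_decrease_of_distance
    (n m p : ℕ)
    (F : EuclideanSpace ℝ (Fin n) → EuclideanSpace ℝ (Fin m))
    (J : EuclideanSpace ℝ (Fin n) → Matrix (Fin m) (Fin n) ℝ)
    (hdiff : ∀ x, HasFDerivAt F (matCLM (J x)) x)
    (hJcont : Continuous J)
    (hne : ∃ x, F x = 0)
    (xstar : EuclideanSpace ℝ (Fin n)) (hxstar : F xstar = 0)
    (δ : ℝ) (hδ0 : 0 < δ) (hδh : δ < 1 / 2)
    (c1 : ℝ) (hc1pos : 0 < c1)
    (hc1 : ∀ x ∈ closedBall xstar (2 * δ), ∀ y ∈ closedBall xstar (2 * δ),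
      ‖matCLM (J y) (x - y) - (F x - F y)‖ ≤ c1 * ‖x - y‖ ^ 2)
    (cF : ℝ) (hcFpos : 0 < cF)
    (hcF : ∀ x ∈ closedBall xstar (2 * δ), ∀ y ∈ closedBall xstar (2 * δ),
      ‖F x - F y‖ ≤ cF * ‖x - y‖)
    (c2 : ℝ) (hc2pos : 0 < c2)
    (hc2 : ∀ x ∈ closedBall xstar (2 * δ),
      c2 * infDist x {y | F y = 0} ≤ ‖F x‖)
    (L : Matrix (Fin p) (Fin n) ℝ) (γ : ℝ) (hγ : 0 < γ)
    (hcomp : ∀ (x : EuclideanSpace ℝ (Fin n)) (v : EuclideanSpace ℝ (Fin n)),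
      ‖matCLM (J x) v‖ ^ 2 + ‖matCLM L v‖ ^ 2 ≥ γ * ‖v‖ ^ 2)
    (x : EuclideanSpace ℝ (Fin n)) (hx : x ∈ closedBall xstar δ)
    (d : EuclideanSpace ℝ (Fin n))
    (hd0 : F x = 0 → d = 0)
    (hd : F x ≠ 0 →
      matCLM ((J x)ᵀ * J x + ‖F x‖ ^ 2 • (Lᵀ * L)) d = -(matCLM (J x)ᵀ (F x)))
    (hxplus : x + d ∈ closedBall xstar δ) :
    infDist (x + d) {y | F y = 0} ≤
      lmC5 c1 c2 cF γ ‖matCLM L‖ * infDist x {y | F y = 0} ^ 2 := by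
  set S : Set (EuclideanSpace ℝ (Fin n)) := {y | F y = 0} with hSdef
  have hFc : Continuous F := by
    rw [continuous_iff_continuousAt]; exact fun z => (hdiff z).continuousAt
  have hScl : IsClosed S := isClosed_eq hFc continuous_const
  have hSne : S.Nonempty := ⟨xstar, hxstar⟩
  by_cases hFx : F x = 0
  · have hxS : x ∈ S := hFx
    rw [hd0 hFx, add_zero, infDist_zero_of_mem hxS]
    simp
  -- main case
  set A := matCLM (J x) with hA
  set B := matCLM L with hB
  set nL := ‖B‖ with hnL
  set f := F x with hf
  set lam := ‖f‖ ^ 2 with hlam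
  set r := infDist x S with hrdef
  have hrnn : 0 ≤ r := infDist_nonneg
  have hr0 : 0 < r := by
    rcases hrnn.lt_or_eq with h | h
    · exact h
    · exact absurd ((hScl.mem_iff_infDist_zero hSne).mpr h.symm) hFx
  have hxδ : dist x xstar ≤ δ := mem_closedBall.mp hx
  have hrδ : r ≤ δ := le_trans (infDist_le_dist_of_mem (show xstar ∈ S from hxstar)) hxδ
  have hx2 : x ∈ closedBall xstar (2 * δ) :=
    closedBall_subset_closedBall (by linarith) hx
  have hxp2 : x + d ∈ closedBall xstar (2 * δ) :=
    closedBall_subset_closedBall (by linarith) hxplus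
  obtain ⟨xb, hxbS, hxbd⟩ := hScl.exists_infDist_eq_dist hSne x
  have hxbF : F xb = 0 := hxbS
  have hdxb : dist x xb = r := hxbd.symm
  have hxb2 : xb ∈ closedBall xstar (2 * δ) := by
    rw [mem_closedBall]
    calc dist xb xstar ≤ dist xb x + dist x xstar := dist_triangle _ _ _
      _ ≤ r + δ := by rw [dist_comm]; linarith [hdxb.le]
      _ ≤ 2 * δ := by linarith
  set v := xb - x with hv
  have hvnorm : ‖v‖ = r := by
    rw [hv, ← dist_eq_norm, dist_comm]; exact hdxb
  -- Taylor bound at (xb, x)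
  have hT : ‖f + A v‖ ≤ c1 * r ^ 2 := by
    have := hc1 xb hxb2 x hx2
    rw [hxbF, zero_sub, sub_neg_eq_add, ← dist_eq_norm, dist_comm xb x, hdxb] at this
    calc ‖f + A v‖ = ‖A v + f‖ := by rw [add_comm]
      _ ≤ c1 * r ^ 2 := this
  -- Lipschitz bound
  have hFle : ‖f‖ ≤ cF * r := by
    have := hcF x hx2 xb hxb2
    rw [hxbF, sub_zero, ← dist_eq_norm, hdxb] at this
    exact this
  -- error bound at x
  have hEB : c2 * r ≤ ‖f‖ := hc2 x hx2
  have hfpos : 0 < ‖f‖ := norm_pos_iff.mpr hFx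
  have hlampos : 0 < lam := by positivity
  -- normal equation → orthogonality
  have horth : ∀ w, ⟪f + A d, A w⟫ + lam * ⟪B d, B w⟫ = 0 := by
    intro w
    have h := hd hFx
    have e1 : matCLM ((J x)ᵀ * J x + ‖F x‖ ^ 2 • (Lᵀ * L)) d
        = matCLM (J x)ᵀ (A d) + lam • matCLM Lᵀ (B d) := by
      rw [matCLM_add_apply, matCLM_smul_apply, matCLM_mul_apply, matCLM_mul_apply]
    rw [e1] at h
    calc ⟪f + A d, A w⟫ + lam * ⟪B d, B w⟫
        = ⟪f, A w⟫ + ⟪matCLM (J x)ᵀ (A d) + lam • matCLM Lᵀ (B d), w⟫ := by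
          rw [inner_add_left, inner_add_left, real_inner_smul_left,
            matCLM_transpose_inner, matCLM_transpose_inner]
          ring
      _ = 0 := by
          rw [h, inner_neg_left, matCLM_transpose_inner]
          ring
  have key := quad_min A B f lam hlampos.le d horth v
  clear_value A B f lam nL r
  have hcmp := hcomp x d
  rw [← hA] at hcmp
  have hEBp := hc2 (x + d) hxp2
  have hAdO := horth d
  have hTayraw := hc1 (x + d) hxp2 x hx2
  rw [add_sub_cancel_left, ← hA, ← hf] at hTayraw
  clear hdiff hJcont hc1 hcF hc2 hcomp hd hd0 horth hFc hne
  have hBv : ‖B v‖ ≤ nL * r := by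
    calc ‖B v‖ ≤ ‖B‖ * ‖v‖ := B.le_opNorm v
      _ = nL * r := by rw [hnL, hvnorm]
  have hnLnn : 0 ≤ nL := by rw [hnL]; exact norm_nonneg _
  -- RHS of key
  have hRHS : ‖f + A v‖ ^ 2 + lam * ‖B v‖ ^ 2 ≤ c1 ^ 2 * r ^ 4 + lam * (nL ^ 2 * r ^ 2) := by
    have h1 : ‖f + A v‖ ^ 2 ≤ (c1 * r ^ 2) ^ 2 :=
      pow_le_pow_left₀ (norm_nonneg _) hT 2
    have h2 : ‖B v‖ ^ 2 ≤ (nL * r) ^ 2 :=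
      pow_le_pow_left₀ (norm_nonneg _) hBv 2
    linarith [mul_le_mul_of_nonneg_left h2 hlampos.le]
  have hlamle : lam ≤ cF ^ 2 * r ^ 2 := by
    have h := mul_self_le_mul_self (norm_nonneg f) hFle
    rw [hlam]; linarith [h]
  have hlamge : c2 ^ 2 * r ^ 2 ≤ lam := by
    have h := mul_self_le_mul_self (mul_nonneg hc2pos.le hrnn) hEB
    calc c2 ^ 2 * r ^ 2 = (c2 * r) * (c2 * r) := by ring
      _ ≤ ‖f‖ * ‖f‖ := h
      _ = lam := by rw [hlam]; ring
  -- bound ‖f + A d‖ ≤ c4 r²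
  have hc4sq : lmC4 c1 cF nL ^ 2 = c1 ^ 2 + cF ^ 2 * nL ^ 2 := by
    rw [lmC4, Real.sq_sqrt (by positivity)]
  have hc4nn : 0 ≤ lmC4 c1 cF nL := Real.sqrt_nonneg _
  have hres : ‖f + A d‖ ≤ lmC4 c1 cF nL * r ^ 2 := by
    have hsq : ‖f + A d‖ ^ 2 ≤ (lmC4 c1 cF nL * r ^ 2) ^ 2 := by
      have expand : (lmC4 c1 cF nL * r ^ 2) ^ 2 = (c1 ^ 2 + cF ^ 2 * nL ^ 2) * r ^ 4 := by
        rw [mul_pow, hc4sq]; ring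
      rw [expand]
      linarith [key, hRHS, mul_nonneg hlampos.le (sq_nonneg ‖B d‖),
        mul_le_mul_of_nonneg_right hlamle (mul_nonneg (sq_nonneg nL) (sq_nonneg r))]
    calc ‖f + A d‖ = Real.sqrt (‖f + A d‖ ^ 2) := (Real.sqrt_sq (norm_nonneg _)).symm
      _ ≤ Real.sqrt ((lmC4 c1 cF nL * r ^ 2) ^ 2) := Real.sqrt_le_sqrt hsq
      _ = lmC4 c1 cF nL * r ^ 2 := Real.sqrt_sq (by positivity)
  -- bound ‖B d‖²
  have hBd : c2 ^ 2 * ‖B d‖ ^ 2 ≤ (c1 ^ 2 + c2 ^ 2 * nL ^ 2) * r ^ 2 := by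
    have h1 : lam * ‖B d‖ ^ 2 ≤ c1 ^ 2 * r ^ 4 + lam * (nL ^ 2 * r ^ 2) := by
      linarith [key, hRHS, sq_nonneg ‖f + A d‖]
    by_cases hcase : ‖B d‖ ^ 2 ≤ nL ^ 2 * r ^ 2
    · linarith [mul_le_mul_of_nonneg_left hcase (sq_nonneg c2), sq_nonneg (c1 * r)]
    · push_neg at hcase
      have h2 : c2 ^ 2 * r ^ 2 * (‖B d‖ ^ 2 - nL ^ 2 * r ^ 2)
          ≤ lam * (‖B d‖ ^ 2 - nL ^ 2 * r ^ 2) :=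
        mul_le_mul_of_nonneg_right hlamge (by linarith)
      have h3 : (c2 ^ 2 * ‖B d‖ ^ 2) * r ^ 2 ≤ ((c1 ^ 2 + c2 ^ 2 * nL ^ 2) * r ^ 2) * r ^ 2 := by
        linarith [h1, h2]
      exact le_of_mul_le_mul_right h3 (by positivity)
  -- bound ‖A d‖²
  have hAd : ‖A d‖ ^ 2 ≤ cF ^ 2 * r ^ 2 := by
    have h := hAdO
    rw [inner_add_left, real_inner_self_eq_norm_sq, real_inner_self_eq_norm_sq] at h
    have hcs : |⟪f, A d⟫| ≤ ‖f‖ * ‖A d‖ := abs_real_inner_le_norm f (A d)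
    have h1 : ‖A d‖ ^ 2 ≤ ‖f‖ * ‖A d‖ := by
      linarith [h, (abs_le.mp hcs).1, mul_nonneg hlampos.le (sq_nonneg ‖B d‖)]
    have h2 : ‖A d‖ ^ 2 ≤ ‖f‖ ^ 2 := by
      nlinarith [sq_nonneg (‖A d‖ - ‖f‖)]
    linarith [h2, hlamle, hlam.le, hlam.symm.le]
  -- bound ‖d‖²
  have hc3sq : lmC3 c1 c2 cF γ nL ^ 2 = (c1 ^ 2 + c2 ^ 2 * (nL ^ 2 + cF ^ 2)) / (c2 ^ 2 * γ) := by
    rw [lmC3, mul_pow, div_pow, one_pow, mul_pow, Real.sq_sqrt hγ.le,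
      Real.sq_sqrt (by positivity)]
    ring
  have hdsq : ‖d‖ ^ 2 ≤ lmC3 c1 c2 cF γ nL ^ 2 * r ^ 2 := by
    rw [hc3sq, div_mul_eq_mul_div, le_div_iff₀ (by positivity)]
    have hcmp' : γ * ‖d‖ ^ 2 ≤ ‖A d‖ ^ 2 + ‖B d‖ ^ 2 := hcmp
    linarith [mul_le_mul_of_nonneg_left hcmp' (sq_nonneg c2),
      mul_le_mul_of_nonneg_left hAd (sq_nonneg c2), hBd]
  -- final assembly
  have hTay : ‖F (x + d) - f - A d‖ ≤ c1 * ‖d‖ ^ 2 := by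
    have this := hTayraw
    calc ‖F (x + d) - f - A d‖ = ‖A d - (F (x + d) - f)‖ := by
          rw [← norm_neg]; congr 1; abel
      _ ≤ c1 * ‖d‖ ^ 2 := this
  have hFp : ‖F (x + d)‖ ≤ (c1 * lmC3 c1 c2 cF γ nL ^ 2 + lmC4 c1 cF nL) * r ^ 2 := by
    have h1 : ‖F (x + d)‖ ≤ ‖F (x + d) - f - A d‖ + ‖f + A d‖ := by
      calc ‖F (x + d)‖ = ‖(F (x + d) - f - A d) + (f + A d)‖ := by congr 1; abel
        _ ≤ _ := norm_add_le _ _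
    have h2 : c1 * ‖d‖ ^ 2 ≤ c1 * (lmC3 c1 c2 cF γ nL ^ 2 * r ^ 2) :=
      mul_le_mul_of_nonneg_left hdsq hc1pos.le
    calc ‖F (x + d)‖ ≤ ‖F (x + d) - f - A d‖ + ‖f + A d‖ := h1
      _ ≤ c1 * ‖d‖ ^ 2 + lmC4 c1 cF nL * r ^ 2 := add_le_add hTay hres
      _ ≤ (c1 * lmC3 c1 c2 cF γ nL ^ 2 + lmC4 c1 cF nL) * r ^ 2 := by linarith [h2]
  have hfinal : c2 * infDist (x + d) S ≤ c2 * (lmC5 c1 c2 cF γ nL * r ^ 2) := by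
    have : c2 * (lmC5 c1 c2 cF γ nL * r ^ 2)
        = (c1 * lmC3 c1 c2 cF γ nL ^ 2 + lmC4 c1 cF nL) * r ^ 2 := by
      rw [lmC5]; field_simp
    rw [this]
    exact le_trans hEBp hFp
  exact le_of_mul_le_mul_left hfinal hc2pos
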